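/- Let $\mu$ be a strict partition with $m$ distinct nonzero parts, $\delta = (m-1, m-2, \ldots, 0)$, and conjugate $\mu' = (c_\ell,\ldots,c_1)$. There is a bijection between maximal shifted multiset tableaux of shape $\mu$ with weight $\lambda$ and diagonal weight $\mathbf{T}$, and shifted restricted tableaux in $SRT(\lambda/\mu)$ with weight $\mathbf{T}$ (i.e., semistandard tableaux of shape $(\lambda-\delta)/(\mu-\delta)$ in alphabet $\{1,\ldots,\ell\}$ with every entry $i$ on or above row $c_i$). -/

import Mathlib

open Finset MvPolynomial

/-- Entries of shifted tableaux are coded by natural numbers: the primed value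
`k'` is coded `2k` and the unprimed value `k` is coded `2k + 1` (`k ≥ 1`), so the
order `1' < 1 < 2' < 2 < ⋯` is the usual order on codes, primed = even code. -/
def diagHt (m : ℕ) (μ : Fin m → ℕ) (ℓ j : ℕ) : ℕ :=
  (Finset.univ.filter fun i : Fin m => ℓ - j < μ i).card

/-- A signed shifted multiset tableau of shape `μ` (a strict partition with `m`
parts, largest part `ℓ`).  `box i j` is the content of the box of row `i`
(0-indexed) lying on the diagonal labeled `j` (diagonals in the `↘` direction are
labeled `ℓ, …, 1` from left to right; the box directly to the right of `d_{i(j+1)}`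
is `d_{ij}`, and the box directly below `d_{ij}` is `d_{(i+1)(j+1)}`).  Each box is
a nonempty multiset of codes (primed values with multiplicity at most one); every
entry `z` directly to the right of a box `b` satisfies `a < z`, or `a = z` with both
unprimed, for all `a ∈ b`; every entry `z` directly below a box `b` satisfies
`a < z`, or `a = z` with both primed, for some `a ∈ b`. -/
structure ShMT (m ℓ : ℕ) (μ : Fin m → ℕ) where
  box : Fin m → ℕ → Multiset ℕ
  pos : ∀ i j, ∀ a ∈ box i j, 2 ≤ a
  primedOnce : ∀ i j a, Even a → (box i j).count a ≤ 1
  supp : ∀ i j, box i j ≠ 0 ↔ (1 ≤ j ∧ j ≤ ℓ ∧ ℓ - j < μ i)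
  right : ∀ (i : Fin m) (j : ℕ), ∀ a ∈ box i (j + 1), ∀ z ∈ box i j,
    a < z ∨ (a = z ∧ Odd a)
  below : ∀ (i i' : Fin m) (j : ℕ), (i : ℕ) + 1 = (i' : ℕ) → box i j ≠ 0 →
    ∀ z ∈ box i' (j + 1), ∃ a ∈ box i j, a < z ∨ (a = z ∧ Even a)

/-- The condition distinguishing (unsigned) shifted multiset tableaux among the
signed ones: the smallest entry of each row (which lies in the leftmost box of the
row, i.e. on the diagonal labeled `ℓ`) is unprimed; equivalently, every primed
entry of a leftmost box has a strictly smaller entry in that box. -/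
def ShMT.RowMinUnprimed {m ℓ : ℕ} {μ : Fin m → ℕ} (P : ShMT m ℓ μ) : Prop :=
  ∀ i : Fin m, ∀ a ∈ P.box i ℓ, Even a → ∃ b ∈ P.box i ℓ, b < a

/-- A tableau has single entries if each box contains at most one entry. -/
def ShMT.IsSingle {m ℓ : ℕ} {μ : Fin m → ℕ} (P : ShMT m ℓ μ) : Prop :=
  ∀ (i : Fin m) (j : ℕ), (P.box i j).card ≤ 1

/-- The weight of a shifted multiset tableau: the number of entries equal to `v`
or `v'`. -/
def ShMT.wt {m ℓ : ℕ} {μ : Fin m → ℕ} (P : ShMT m ℓ μ) (v : ℕ) : ℕ :=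
  ∑ i : Fin m, ∑ j ∈ Finset.Icc 1 ℓ,
    ((P.box i j).count (2 * v) + (P.box i j).count (2 * v + 1))

/-- The diagonal weight at diagonal label `j`: the number of entries on diagonal
`j` minus the number of boxes on diagonal `j`. -/
def ShMT.dw {m ℓ : ℕ} {μ : Fin m → ℕ} (P : ShMT m ℓ μ) (j : ℕ) : ℕ :=
  (∑ i : Fin m, (P.box i j).card) - diagHt m μ ℓ j

/-- The maximality conditions for a shifted multiset tableau: box `d_{ij}` (row
`i`, 0-indexed) contains only unprimed entries equal to `i + 1` (the 1-indexed row
number; code `2(i+1)+1`), and for all adjacent rows `i, i+1` and all `k ≥ 0`,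
`∑_{1 ≤ j ≤ k} (|d_{(i+1)j}| - |d_{i(j-1)}|) ≤ 0`. -/
def ShMT.IsMax {m ℓ : ℕ} {μ : Fin m → ℕ} (P : ShMT m ℓ μ) : Prop :=
  (∀ (i : Fin m) (j : ℕ), ∀ a ∈ P.box i j, a = 2 * ((i : ℕ) + 1) + 1) ∧
  (∀ (i i' : Fin m), (i : ℕ) + 1 = (i' : ℕ) → ∀ k : ℕ,
    (∑ j ∈ Finset.Icc 1 k,
      (((P.box i' j).card : ℤ) - ((P.box i (j - 1)).card : ℤ))) ≤ 0)

/-- A shifted restricted tableau of shape `(λ-δ)/(μ-δ)`, `δ = (m-1, …, 1, 0)`: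
a semistandard filling (0-indexed columns, value `0` marking empty cells; row `i`
occupies columns `μ i - (m-1-i) ≤ j < λ i - (m-1-i)`) with values in `{1, …, ℓ}`,
weakly increasing along rows, strictly increasing down columns, and with every
entry `v` occurring on or above row `c_v = diagHt m μ ℓ v` (1-indexed rows). -/
structure SRTab (m ℓ : ℕ) (μ lam : Fin m → ℕ) where
  entry : Fin m → ℕ → ℕ
  supp : ∀ i j, entry i j ≠ 0 ↔
    (μ i - (m - 1 - (i : ℕ)) ≤ j ∧ j < lam i - (m - 1 - (i : ℕ)))
  le_alpha : ∀ i j, entry i j ≤ ℓ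
  row : ∀ (i : Fin m) (j j' : ℕ), j ≤ j' → entry i j ≠ 0 → entry i j' ≠ 0 →
    entry i j ≤ entry i j'
  col : ∀ (i i' : Fin m) (j : ℕ), i < i' → entry i j ≠ 0 → entry i' j ≠ 0 →
    entry i j < entry i' j
  restrict : ∀ i j, entry i j ≠ 0 → (i : ℕ) < diagHt m μ ℓ (entry i j)

/-- The weight of a shifted restricted tableau: the number of entries equal to
`v ≥ 1`. -/
def SRTab.wt {m ℓ : ℕ} {μ lam : Fin m → ℕ} (R : SRTab m ℓ μ lam) (v : ℕ) : ℕ :=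
  ∑ i : Fin m, ((Finset.range (lam i)).filter fun j => R.entry i j = v).card

namespace S17

open Finset

variable {m ℓ : ℕ}

/-- Support predicate: diagonal `j` meets row `i`. -/
def sup (ℓ : ℕ) (μ : Fin m → ℕ) (i : Fin m) (j : ℕ) : Prop :=
  1 ≤ j ∧ j ≤ ℓ ∧ ℓ - j < μ i

instance (ℓ : ℕ) (μ : Fin m → ℕ) (i : Fin m) (j : ℕ) : Decidable (sup ℓ μ i j) :=
  inferInstanceAs (Decidable (_ ∧ _ ∧ _))

/-- Starting column of row `i` in the skew shape. -/
def colS (μ : Fin m → ℕ) (i : Fin m) : ℕ := μ i - (m - 1 - (i : ℕ))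

/-- Partial sums of the "excess" multiplicities. -/
def E (ℓ : ℕ) (μ : Fin m → ℕ) (n : Fin m → ℕ → ℕ) (i : Fin m) (k : ℕ) : ℕ :=
  ∑ j ∈ Icc 1 k, (n i j - if sup ℓ μ i j then 1 else 0)

/-- The intermediate data: a multiplicity matrix with all the relevant conditions. -/
def IsN (ℓ : ℕ) (μ lam : Fin m → ℕ) (T : ℕ → ℕ) (n : Fin m → ℕ → ℕ) : Prop :=
  (∀ i j, n i j ≠ 0 ↔ sup ℓ μ i j) ∧
  (∀ i, ∑ j ∈ Icc 1 ℓ, n i j = lam i) ∧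
  (∀ j, 1 ≤ j → j ≤ ℓ → (∑ i, n i j) - diagHt m μ ℓ j = T j) ∧
  (∀ i i' : Fin m, (i : ℕ) + 1 = (i' : ℕ) → ∀ k : ℕ,
    (∑ j ∈ Icc 1 k, ((n i' j : ℤ) - (n i (j - 1) : ℤ))) ≤ 0)

lemma fin_gap {f : Fin m → ℕ} (hf : ∀ i j : Fin m, i < j → f j < f i) :
    ∀ d : ℕ, ∀ i j : Fin m, (i : ℕ) + d = (j : ℕ) → f j + d ≤ f i := by
  intro d
  induction d with
  | zero =>
    intro i j h
    have : i = j := Fin.ext (by omega)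
    subst this; omega
  | succ d ih =>
    intro i j h
    have hjm := j.isLt
    have hj1 : (j : ℕ) - 1 < m := by omega
    have h1 := ih i ⟨(j : ℕ) - 1, hj1⟩ (by show (i : ℕ) + d = (j : ℕ) - 1; omega)
    have h2 := hf ⟨(j : ℕ) - 1, hj1⟩ j (by rw [Fin.lt_def]; show (j : ℕ) - 1 < (j : ℕ); omega)
    omega

section basic

variable {μ lam : Fin m → ℕ}

lemma sup_filter_card (μ : Fin m → ℕ) (i : Fin m) (k : ℕ) :
    ((Icc 1 k).filter (fun j => sup ℓ μ i j)).card = min k ℓ - (ℓ - μ i) := by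
  have h : ((Icc 1 k).filter (fun j => sup ℓ μ i j)) = Icc (ℓ - μ i + 1) (min k ℓ) := by
    ext j
    rw [mem_filter]
    simp only [mem_filter, mem_Icc, sup]
    omega
  rw [h, Nat.card_Icc]
  omega

lemma sum_n_eq {n : Fin m → ℕ → ℕ} (ha : ∀ i j, n i j ≠ 0 ↔ sup ℓ μ i j)
    (i : Fin m) (k : ℕ) :
    ∑ j ∈ Icc 1 k, n i j = E ℓ μ n i k + (min k ℓ - (ℓ - μ i)) := by
  rw [E, ← sup_filter_card (ℓ := ℓ) μ i k, Finset.card_filter, ← Finset.sum_add_distrib]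
  refine Finset.sum_congr rfl fun j _ => ?_
  by_cases h : sup ℓ μ i j
  · have := (ha i j).2 h
    simp only [h, if_true]
    omega
  · have h0 : n i j = 0 := by by_contra hc; exact h ((ha i j).1 hc)
    simp [h, h0]

lemma E_zero (n : Fin m → ℕ → ℕ) (i : Fin m) : E ℓ μ n i 0 = 0 := by simp [E]

lemma E_mono (n : Fin m → ℕ → ℕ) (i : Fin m) {k k' : ℕ} (h : k ≤ k') :
    E ℓ μ n i k ≤ E ℓ μ n i k' :=
  Finset.sum_le_sum_of_subset (Finset.Icc_subset_Icc_right h)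

lemma E_top {n : Fin m → ℕ → ℕ} (ha : ∀ i j, n i j ≠ 0 ↔ sup ℓ μ i j)
    (i : Fin m) {k : ℕ} (h : ℓ ≤ k) : E ℓ μ n i k = E ℓ μ n i ℓ := by
  refine (Finset.sum_subset (Finset.Icc_subset_Icc_right h) fun j hj hnj => ?_).symm
  simp only [mem_Icc] at hj hnj
  have hns : ¬ sup ℓ μ i j := by simp only [sup]; omega
  have h0 : n i j = 0 := by by_contra hc; exact hns ((ha i j).1 hc)
  simp [h0]

lemma E_succ (n : Fin m → ℕ → ℕ) (i : Fin m) {k : ℕ} (hk : 1 ≤ k) :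
    E ℓ μ n i k = E ℓ μ n i (k - 1) + (n i k - if sup ℓ μ i k then 1 else 0) := by
  obtain ⟨k', rfl⟩ : ∃ k', k = k' + 1 := ⟨k - 1, by omega⟩
  rw [E, Finset.sum_Icc_succ_top (by omega)]
  simp [E]

lemma E_total {n : Fin m → ℕ → ℕ} (ha : ∀ i j, n i j ≠ 0 ↔ sup ℓ μ i j)
    {i : Fin m} (hb : ∑ j ∈ Icc 1 ℓ, n i j = lam i) (hml : μ i ≤ ℓ) :
    E ℓ μ n i ℓ = lam i - μ i := by
  have := sum_n_eq ha i ℓ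
  omega

lemma lt_diagHt_of_sup (hstrict : ∀ i j : Fin m, i < j → μ j < μ i)
    {i : Fin m} {v : ℕ} (hs : sup ℓ μ i v) : (i : ℕ) < diagHt m μ ℓ v := by
  have hsub : Finset.Iic i ⊆ Finset.univ.filter (fun i' : Fin m => ℓ - v < μ i') := by
    intro i'' h
    simp only [Finset.mem_Iic] at h
    simp only [Finset.mem_filter, Finset.mem_univ, true_and]
    rcases lt_or_eq_of_le h with hlt | heq
    · exact lt_trans hs.2.2 (hstrict i'' i hlt)
    · rw [heq]; exact hs.2.2
  have := Finset.card_le_card hsub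
  rw [Fin.card_Iic] at this
  unfold diagHt
  omega

lemma sup_of_lt_diagHt (hstrict : ∀ i j : Fin m, i < j → μ j < μ i)
    {i : Fin m} {v : ℕ} (h1 : 1 ≤ v) (h2 : v ≤ ℓ)
    (hd : (i : ℕ) < diagHt m μ ℓ v) : sup ℓ μ i v := by
  refine ⟨h1, h2, ?_⟩
  by_contra h
  push_neg at h
  have hsub : Finset.univ.filter (fun i' : Fin m => ℓ - v < μ i') ⊆ Finset.Iio i := by
    intro i'' hmem
    simp only [Finset.mem_filter, Finset.mem_univ, true_and] at hmem
    simp only [Finset.mem_Iio]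
    by_contra hge
    push_neg at hge
    have : μ i'' ≤ μ i := by
      rcases lt_or_eq_of_le hge with hlt | heq
      · exact le_of_lt (hstrict i i'' hlt)
      · rw [← heq]
    omega
  have := Finset.card_le_card hsub
  rw [Fin.card_Iio] at this
  unfold diagHt at hd
  omega

lemma shift_sum (f : ℕ → ℤ) (hf0 : f 0 = 0) {k : ℕ} (hk : 1 ≤ k) :
    ∑ j ∈ Icc 1 k, f (j - 1) = ∑ j ∈ Icc 1 (k - 1), f j := by
  have h1 : ∑ j ∈ Icc 1 k, f (j - 1) = ∑ j ∈ Icc 0 (k - 1), f j := by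
    refine Finset.sum_nbij' (fun j => j - 1) (fun j => j + 1) ?_ ?_ ?_ ?_ ?_ <;>
      intro a ha <;> simp only [mem_Icc] at * <;> first | omega | rfl
  have h2 : Finset.Icc 0 (k - 1) = insert 0 (Icc 1 (k - 1)) := by
    ext x
    simp only [mem_Icc, mem_insert]
    omega
  rw [h1, h2, Finset.sum_insert (by simp), hf0, zero_add]

lemma dsum {n : Fin m → ℕ → ℕ} (ha : ∀ i j, n i j ≠ 0 ↔ sup ℓ μ i j)
    {i i' : Fin m} {k : ℕ} (hk : 1 ≤ k)
    (hd : (∑ j ∈ Icc 1 k, ((n i' j : ℤ) - (n i (j - 1) : ℤ))) ≤ 0) :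
    ∑ j ∈ Icc 1 k, n i' j ≤ ∑ j ∈ Icc 1 (k - 1), n i j := by
  rw [Finset.sum_sub_distrib] at hd
  have h0 : n i 0 = 0 := by
    by_contra hc
    have := (ha i 0).1 hc
    exact absurd this.1 (by omega)
  have hshift : ∑ j ∈ Icc 1 k, (n i (j - 1) : ℤ) = ∑ j ∈ Icc 1 (k - 1), (n i j : ℤ) :=
    shift_sum (fun j => (n i j : ℤ)) (by simp [h0]) hk
  rw [hshift] at hd
  have : (∑ j ∈ Icc 1 k, (n i' j : ℤ)) ≤ ∑ j ∈ Icc 1 (k - 1), (n i j : ℤ) := by omega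
  exact_mod_cast this

end basic

section sideA

variable {μ lam : Fin m → ℕ} {T : ℕ → ℕ}

lemma ShMT.ext' {P Q : ShMT m ℓ μ} (h : P.box = Q.box) : P = Q := by
  cases P; cases Q; cases h; rfl

/-- The maximal shifted multiset tableau associated to a multiplicity matrix. -/
def mkP (ℓ : ℕ) (μ : Fin m → ℕ) (n : Fin m → ℕ → ℕ)
    (ha : ∀ i j, n i j ≠ 0 ↔ sup ℓ μ i j) : ShMT m ℓ μ where
  box i j := Multiset.replicate (n i j) (2 * ((i : ℕ) + 1) + 1)
  pos i j a hmem := by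
    have := Multiset.eq_of_mem_replicate hmem; omega
  primedOnce i j a hEven := by
    show Multiset.count a (Multiset.replicate (n i j) (2 * ((i : ℕ) + 1) + 1)) ≤ 1
    rw [Multiset.count_replicate]
    rw [Nat.even_iff] at hEven
    split <;> omega
  supp i j := by
    show Multiset.replicate (n i j) (2 * ((i : ℕ) + 1) + 1) ≠ 0 ↔
      1 ≤ j ∧ j ≤ ℓ ∧ ℓ - j < μ i
    have h1 : Multiset.replicate (n i j) (2 * ((i : ℕ) + 1) + 1) ≠ 0 ↔ n i j ≠ 0 := by
      constructor
      · intro h hc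
        exact h (by rw [hc]; rfl)
      · intro h hc
        have := congrArg Multiset.card hc
        rw [Multiset.card_replicate] at this
        exact h this
    exact h1.trans (ha i j)
  right i j a hma z hmz := by
    have h1 := Multiset.eq_of_mem_replicate hma
    have h2 := Multiset.eq_of_mem_replicate hmz
    exact Or.inr ⟨by rw [h1, h2], by rw [h1]; exact ⟨(i : ℕ) + 1, by ring⟩⟩
  below i i' j hii hne z hz := by
    have hne' : n i j ≠ 0 := fun h0 => hne (by simp [h0])
    have h2 := Multiset.eq_of_mem_replicate hz
    exact ⟨2 * ((i : ℕ) + 1) + 1, Multiset.mem_replicate.2 ⟨hne', rfl⟩, Or.inl (by omega)⟩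

@[simp] lemma mkP_box (ℓ : ℕ) (μ : Fin m → ℕ) (n : Fin m → ℕ → ℕ)
    (ha : ∀ i j, n i j ≠ 0 ↔ sup ℓ μ i j) (i : Fin m) (j : ℕ) :
    (mkP ℓ μ n ha).box i j = Multiset.replicate (n i j) (2 * ((i : ℕ) + 1) + 1) := rfl

lemma wt_eq (P : ShMT m ℓ μ)
    (hmax1 : ∀ (i : Fin m) (j : ℕ), ∀ a ∈ P.box i j, a = 2 * ((i : ℕ) + 1) + 1)
    (i0 : Fin m) :
    P.wt ((i0 : ℕ) + 1) = ∑ j ∈ Icc 1 ℓ, Multiset.card (P.box i0 j) := by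
  have hbox : ∀ (i : Fin m) (j : ℕ),
      P.box i j = Multiset.replicate (Multiset.card (P.box i j)) (2 * ((i : ℕ) + 1) + 1) :=
    fun i j => Multiset.eq_replicate.2 ⟨rfl, fun b hb => hmax1 i j b hb⟩
  unfold ShMT.wt
  rw [Finset.sum_eq_single i0]
  · refine Finset.sum_congr rfl fun j _ => ?_
    conv_lhs => rw [hbox i0 j]
    rw [Multiset.count_replicate, Multiset.count_replicate, if_neg (by omega), if_pos (by omega)]
    omega
  · intro i _ hne
    have hvne : (i : ℕ) ≠ (i0 : ℕ) := fun h => hne (Fin.ext h)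
    refine Finset.sum_eq_zero fun j _ => ?_
    conv_lhs => rw [hbox i j]
    rw [Multiset.count_replicate, Multiset.count_replicate, if_neg (by omega), if_neg (by omega)]
    rfl
  · intro h
    exact absurd (Finset.mem_univ i0) h

/-- Side A equivalence. -/
def equivA (ℓ : ℕ) (μ lam : Fin m → ℕ) (T : ℕ → ℕ) :
    {P : ShMT m ℓ μ // P.RowMinUnprimed ∧ P.IsMax ∧
        (∀ i : Fin m, P.wt ((i : ℕ) + 1) = lam i) ∧
        (∀ j, 1 ≤ j → j ≤ ℓ → P.dw j = T j)} ≃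
    {n : Fin m → ℕ → ℕ // IsN ℓ μ lam T n} where
  toFun P := ⟨fun i j => Multiset.card (P.1.box i j), by
    obtain ⟨P, hrm, hmax, hwt, hdw⟩ := P
    refine ⟨?_, ?_, ?_, ?_⟩
    · intro i j
      have := P.supp i j
      simp only [sup]
      constructor
      · intro h
        exact this.1 fun h0 => h (by rw [h0]; rfl)
      · intro h hc
        exact (this.2 h) (Multiset.card_eq_zero.1 hc)
    · intro i
      rw [← wt_eq P hmax.1 i]
      exact hwt i
    · intro j h1 h2
      exact hdw j h1 h2
    · exact hmax.2⟩
  invFun n := ⟨mkP ℓ μ n.1 n.2.1, by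
    obtain ⟨n, ha, hb, hc, hd⟩ := n
    refine ⟨?_, ⟨?_, ?_⟩, ?_, ?_⟩
    · intro i a hmem hEven
      have := Multiset.eq_of_mem_replicate hmem
      rw [Nat.even_iff] at hEven
      omega
    · exact fun i j a hmem => Multiset.eq_of_mem_replicate hmem
    · intro i i' h k
      have := hd i i' h k
      simpa using this
    · intro i
      rw [wt_eq _ (fun i j a hmem => Multiset.eq_of_mem_replicate hmem) i]
      simpa using hb i
    · intro j h1 h2
      have := hc j h1 h2
      simpa [ShMT.dw] using this⟩
  left_inv P := by
    refine Subtype.ext (ShMT.ext' ?_)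
    funext i j
    exact (Multiset.eq_replicate.2 ⟨rfl, fun b hb => P.2.2.1.1 i j b hb⟩).symm
  right_inv n := by
    refine Subtype.ext ?_
    funext i j
    simp

end sideA

section sideB

variable {μ lam : Fin m → ℕ} {T : ℕ → ℕ}

lemma SRTab.ext' {R S : SRTab m ℓ μ lam} (h : R.entry = S.entry) : R = S := by
  cases R; cases S
  simp only at h
  subst h
  rfl

lemma diagHt_eq (μ : Fin m → ℕ) {v : ℕ} (hv1 : 1 ≤ v) (hv2 : v ≤ ℓ) :
    diagHt m μ ℓ v = ∑ i : Fin m, (if sup ℓ μ i v then 1 else 0) := by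
  unfold diagHt
  rw [Finset.card_filter]
  refine Finset.sum_congr rfl fun i _ => ?_
  by_cases h : ℓ - v < μ i
  · rw [if_pos h, if_pos ⟨hv1, hv2, h⟩]
  · rw [if_neg h, if_neg fun hs => h hs.2.2]

/-- The number of nonzero entries of value at most `k` in row `i`. -/
def cnt (R : SRTab m ℓ μ lam) (i : Fin m) (k : ℕ) : ℕ :=
  ((range (lam i)).filter fun c => R.entry i c ≠ 0 ∧ R.entry i c ≤ k).card

/-- The number of entries equal to `v` in row `i`. -/
def extR (R : SRTab m ℓ μ lam) (i : Fin m) (v : ℕ) : ℕ :=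
  ((range (lam i)).filter fun c => R.entry i c = v).card

lemma row_le_iff (R : SRTab m ℓ μ lam) {i : Fin m} {c k : ℕ} (h0 : R.entry i c ≠ 0) :
    R.entry i c ≤ k ↔ c < colS μ i + cnt R i k := by
  have hb := (R.supp i c).1 h0
  constructor
  · intro h
    have hsub : Icc (colS μ i) c ⊆
        (range (lam i)).filter (fun c' => R.entry i c' ≠ 0 ∧ R.entry i c' ≤ k) := by
      intro c' hc'
      rw [mem_Icc] at hc'
      have hb' : R.entry i c' ≠ 0 := (R.supp i c').2 ⟨hc'.1, by omega⟩
      have hrow := R.row i c' c hc'.2 hb' h0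
      rw [mem_filter, mem_range]
      exact ⟨by omega, hb', le_trans hrow h⟩
    have hcard := Finset.card_le_card hsub
    rw [Nat.card_Icc] at hcard
    unfold cnt colS at *
    omega
  · intro h
    by_contra hgt
    push_neg at hgt
    have hsub : (range (lam i)).filter (fun c' => R.entry i c' ≠ 0 ∧ R.entry i c' ≤ k)
        ⊆ Ico (colS μ i) c := by
      intro c' hc'
      rw [mem_filter, mem_range] at hc'
      obtain ⟨hcr, hne, hlek⟩ := hc'
      have hb' := (R.supp i c').1 hne
      rw [mem_Ico]
      refine ⟨hb'.1, ?_⟩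
      by_contra hge
      push_neg at hge
      have := R.row i c c' hge h0 hne
      omega
    have hcard := Finset.card_le_card hsub
    rw [Nat.card_Ico] at hcard
    unfold cnt colS at *
    omega

lemma cnt_top (R : SRTab m ℓ μ lam) {i : Fin m}
    (hmgei : m ≤ μ i + (i : ℕ)) (hsubi : μ i ≤ lam i) :
    cnt R i ℓ = lam i - μ i := by
  unfold cnt
  have hset : (range (lam i)).filter (fun c => R.entry i c ≠ 0 ∧ R.entry i c ≤ ℓ)
      = Ico (μ i - (m - 1 - (i : ℕ))) (lam i - (m - 1 - (i : ℕ))) := by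
    ext c
    rw [mem_filter, mem_range, mem_Ico, R.supp i c]
    have := R.le_alpha i c
    omega
  rw [hset, Nat.card_Ico]
  have := i.isLt
  omega

lemma cnt_eq_sum (R : SRTab m ℓ μ lam) (i : Fin m) (k : ℕ) :
    cnt R i k = ∑ v ∈ Icc 1 k, extR R i v := by
  unfold cnt
  rw [Finset.card_eq_sum_card_fiberwise (f := fun c => R.entry i c) (t := Icc 1 k)
    (fun c hc => by simp only [mem_coe, mem_filter, mem_range] at hc; show R.entry i c ∈ Icc 1 k; rw [mem_Icc]; omega)]
  refine Finset.sum_congr rfl fun v hv => ?_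
  rw [mem_Icc] at hv
  unfold extR
  congr 1
  ext c
  simp only [mem_filter, mem_range]
  constructor
  · rintro ⟨⟨h1, h2⟩, h3⟩
    exact ⟨h1, h3⟩
  · rintro ⟨h1, h2⟩
    exact ⟨⟨h1, by omega, by omega⟩, h2⟩

lemma cnt_succ (R : SRTab m ℓ μ lam) (i : Fin m) {v : ℕ} (hv : 1 ≤ v) :
    cnt R i v = cnt R i (v - 1) + extR R i v := by
  obtain ⟨v', rfl⟩ : ∃ v'', v = v'' + 1 := ⟨v - 1, by omega⟩
  rw [cnt_eq_sum, cnt_eq_sum, Finset.sum_Icc_succ_top (by omega)]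
  simp

lemma cnt_mono (R : SRTab m ℓ μ lam) (i : Fin m) {k k' : ℕ} (h : k ≤ k') :
    cnt R i k ≤ cnt R i k' := by
  apply Finset.card_le_card
  intro c hc
  rw [mem_filter] at hc ⊢
  exact ⟨hc.1, hc.2.1, le_trans hc.2.2 h⟩

lemma cnt_stab (R : SRTab m ℓ μ lam) (i : Fin m) {k : ℕ} (h : ℓ ≤ k) :
    cnt R i k = cnt R i ℓ := by
  unfold cnt
  congr 1
  ext c
  simp only [mem_filter, mem_range]
  have := R.le_alpha i c
  omega

lemma entry_sup (hstrict : ∀ i j : Fin m, i < j → μ j < μ i) (R : SRTab m ℓ μ lam)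
    {i : Fin m} {c : ℕ} (h0 : R.entry i c ≠ 0) : sup ℓ μ i (R.entry i c) :=
  sup_of_lt_diagHt hstrict (Nat.one_le_iff_ne_zero.2 h0) (R.le_alpha i c)
    (R.restrict i c h0)

lemma extR_sup (hstrict : ∀ i j : Fin m, i < j → μ j < μ i) (R : SRTab m ℓ μ lam)
    {i : Fin m} {v : ℕ} (hv : 1 ≤ v) (h : extR R i v ≠ 0) : sup ℓ μ i v := by
  obtain ⟨c, hc⟩ := Finset.card_pos.1 (Nat.pos_of_ne_zero h)
  rw [mem_filter] at hc
  have h0 : R.entry i c ≠ 0 := by rw [hc.2]; omega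
  have := entry_sup hstrict R h0
  rwa [hc.2] at this

lemma extR_gt (R : SRTab m ℓ μ lam) {i : Fin m} {v : ℕ} (hv : ℓ < v) : extR R i v = 0 := by
  unfold extR
  rw [Finset.card_eq_zero, Finset.filter_eq_empty_iff]
  intro c _
  have := R.le_alpha i c
  omega

lemma cnt_zero (hstrict : ∀ i j : Fin m, i < j → μ j < μ i) (R : SRTab m ℓ μ lam)
    {i : Fin m} {k : ℕ} (hml : μ i ≤ ℓ) (hk : k ≤ ℓ - μ i) : cnt R i k = 0 := by
  unfold cnt
  rw [Finset.card_eq_zero, Finset.filter_eq_empty_iff]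
  rintro c _ ⟨h0, hle⟩
  have := (entry_sup hstrict R h0).2.2
  omega

lemma cnt_claim (R : SRTab m ℓ μ lam)
    (hstrict : ∀ i j : Fin m, i < j → μ j < μ i)
    (hlstrict : ∀ i j : Fin m, i < j → lam j < lam i)
    (hmge : ∀ i : Fin m, m ≤ μ i + (i : ℕ)) (hsub : ∀ i, μ i ≤ lam i)
    {i i' : Fin m} (hii : (i : ℕ) + 1 = (i' : ℕ)) (k : ℕ) :
    cnt R i' k + μ i' + 1 ≤ cnt R i (k - 1) + μ i := by
  have hilt : i < i' := by rw [Fin.lt_def]; omega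
  have hmui : μ i' < μ i := hstrict i i' hilt
  by_cases hE : cnt R i' k = 0
  · rw [hE]
    have := Nat.zero_le (cnt R i (k - 1))
    omega
  · have him := i.isLt
    have him' := i'.isLt
    have hmgei := hmge i
    have hmgei' := hmge i'
    have hsubi := hsub i
    have hsubi' := hsub i'
    have hlami : lam i' < lam i := hlstrict i i' hilt
    have hcnt_le : cnt R i' k ≤ lam i' - μ i' := by
      rcases le_total k ℓ with h | h
      · rw [← cnt_top R hmgei' hsubi']
        exact cnt_mono R i' h
      · rw [cnt_stab R i' h, cnt_top R hmgei' hsubi']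
    set c := colS μ i' + cnt R i' k - 1 with hc
    have hsupc : R.entry i' c ≠ 0 := by
      rw [R.supp]
      unfold colS at hc
      constructor <;> omega
    have hlec : R.entry i' c ≤ k := by
      rw [row_le_iff R hsupc]
      omega
    by_cases hcs : colS μ i ≤ c
    · have hb := (R.supp i' c).1 hsupc
      have hsupci : R.entry i c ≠ 0 := by
        rw [R.supp]
        unfold colS at hcs
        constructor <;> omega
      have hcol := R.col i i' c hilt hsupci hsupc
      have hk1 : R.entry i c ≤ k - 1 := by omega
      have hlt := (row_le_iff R hsupci).1 hk1
      unfold colS at *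
      omega
    · push_neg at hcs
      unfold colS at *
      omega

/-- The multiplicity matrix of a shifted restricted tableau. -/
def toN (R : SRTab m ℓ μ lam) : Fin m → ℕ → ℕ :=
  fun i j => if 1 ≤ j then extR R i j + (if sup ℓ μ i j then 1 else 0) else 0

lemma toN_a (hstrict : ∀ i j : Fin m, i < j → μ j < μ i) (R : SRTab m ℓ μ lam) :
    ∀ i j, toN R i j ≠ 0 ↔ sup ℓ μ i j := by
  intro i j
  unfold toN
  by_cases hj : 1 ≤ j
  · rw [if_pos hj]
    by_cases hs : sup ℓ μ i j
    · simp [hs]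
    · have h0 : extR R i j = 0 := by
        by_contra hc
        exact hs (extR_sup hstrict R hj hc)
      simp [hs, h0]
  · rw [if_neg hj]
    constructor
    · intro h
      exact absurd rfl h
    · intro hs
      exact absurd hs.1 hj

lemma E_toN (R : SRTab m ℓ μ lam) (i : Fin m) (k : ℕ) :
    E ℓ μ (toN R) i k = cnt R i k := by
  rw [cnt_eq_sum]
  unfold E toN
  refine Finset.sum_congr rfl fun j hj => ?_
  rw [mem_Icc] at hj
  rw [if_pos hj.1]
  omega

/-- The entry function of the tableau associated to a multiplicity matrix. -/
noncomputable def mkE (ℓ : ℕ) (μ : Fin m → ℕ) (n : Fin m → ℕ → ℕ) (i : Fin m) (c : ℕ) : ℕ :=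
  if colS μ i ≤ c ∧ c < colS μ i + E ℓ μ n i ℓ then
    sInf {k | c - colS μ i < E ℓ μ n i k}
  else 0

section mkElemmas

variable {n : Fin m → ℕ → ℕ} {i : Fin m} {c : ℕ}

lemma mkE_mem (hc : colS μ i ≤ c ∧ c < colS μ i + E ℓ μ n i ℓ) :
    c - colS μ i < E ℓ μ n i (mkE ℓ μ n i c) := by
  rw [mkE, if_pos hc]
  have hne : ℓ ∈ {k | c - colS μ i < E ℓ μ n i k} := by
    simp only [Set.mem_setOf_eq]
    omega
  exact Nat.sInf_mem ⟨ℓ, hne⟩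

lemma mkE_le (hc : colS μ i ≤ c ∧ c < colS μ i + E ℓ μ n i ℓ) {k : ℕ}
    (h : c - colS μ i < E ℓ μ n i k) : mkE ℓ μ n i c ≤ k := by
  rw [mkE, if_pos hc]
  exact Nat.sInf_le h

lemma mkE_le_iff (hc : colS μ i ≤ c ∧ c < colS μ i + E ℓ μ n i ℓ) (k : ℕ) :
    mkE ℓ μ n i c ≤ k ↔ c - colS μ i < E ℓ μ n i k :=
  ⟨fun h => lt_of_lt_of_le (mkE_mem hc) (E_mono n i h), fun h => mkE_le hc h⟩

lemma mkE_pos (hc : colS μ i ≤ c ∧ c < colS μ i + E ℓ μ n i ℓ) : 1 ≤ mkE ℓ μ n i c := by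
  by_contra h
  push_neg at h
  have h0 : mkE ℓ μ n i c ≤ 0 := by omega
  rw [mkE_le_iff hc] at h0
  rw [E_zero] at h0
  omega

lemma mkE_le_l (hc : colS μ i ≤ c ∧ c < colS μ i + E ℓ μ n i ℓ) : mkE ℓ μ n i c ≤ ℓ :=
  mkE_le hc (by omega)

lemma mkE_nz_iff : mkE ℓ μ n i c ≠ 0 ↔ (colS μ i ≤ c ∧ c < colS μ i + E ℓ μ n i ℓ) := by
  constructor
  · intro h
    by_contra hreg
    rw [mkE, if_neg hreg] at h
    exact h rfl
  · intro hreg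
    have := mkE_pos hreg
    omega

lemma mkE_min (hc : colS μ i ≤ c ∧ c < colS μ i + E ℓ μ n i ℓ) {k : ℕ}
    (h : k < mkE ℓ μ n i c) : E ℓ μ n i k ≤ c - colS μ i := by
  by_contra h'
  push_neg at h'
  exact absurd (mkE_le hc h') (by omega)

lemma mkE_sup (ha : ∀ i j, n i j ≠ 0 ↔ sup ℓ μ i j)
    (hc : colS μ i ≤ c ∧ c < colS μ i + E ℓ μ n i ℓ) : sup ℓ μ i (mkE ℓ μ n i c) := by
  set v := mkE ℓ μ n i c with hv
  have h1 : 1 ≤ v := mkE_pos hc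
  have h2 : c - colS μ i < E ℓ μ n i v := mkE_mem hc
  have h3 := mkE_min hc (show v - 1 < v by omega)
  have h4 := E_succ (ℓ := ℓ) (μ := μ) n i h1
  by_contra hs
  have h0 : n i v = 0 := by
    by_contra hc'
    exact hs ((ha i v).1 hc')
  rw [h0, if_neg hs] at h4
  omega

lemma mkE_col_adj (ha : ∀ i j, n i j ≠ 0 ↔ sup ℓ μ i j)
    (hd : ∀ i i' : Fin m, (i : ℕ) + 1 = (i' : ℕ) → ∀ k : ℕ,
      (∑ j ∈ Icc 1 k, ((n i' j : ℤ) - (n i (j - 1) : ℤ))) ≤ 0)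
    (hstrict : ∀ i j : Fin m, i < j → μ j < μ i)
    (hml : ∀ i, μ i ≤ ℓ) (hmge : ∀ i : Fin m, m ≤ μ i + (i : ℕ))
    {i i' : Fin m} (hii : (i : ℕ) + 1 = (i' : ℕ))
    (hr : colS μ i ≤ c ∧ c < colS μ i + E ℓ μ n i ℓ)
    (hr' : colS μ i' ≤ c ∧ c < colS μ i' + E ℓ μ n i' ℓ) :
    mkE ℓ μ n i c < mkE ℓ μ n i' c := by
  set v' := mkE ℓ μ n i' c with hv'
  have h1 : 1 ≤ v' := mkE_pos hr'
  obtain ⟨hs1, hs2, hs3⟩ : sup ℓ μ i' v' := mkE_sup ha hr'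
  have hspec : c - colS μ i' < E ℓ μ n i' v' := mkE_mem hr'
  have hsum := dsum ha h1 (hd i i' hii v')
  have hB := sum_n_eq ha i' v'
  have hC := sum_n_eq ha i (v' - 1)
  have hmui : μ i' < μ i := hstrict i i' (by rw [Fin.lt_def]; omega)
  have hmli := hml i
  have hmli' := hml i'
  have hmgei := hmge i
  have hmgei' := hmge i'
  have him' := i'.isLt
  have hgoal : c - colS μ i < E ℓ μ n i (v' - 1) := by
    unfold colS at *
    omega
  have := mkE_le hr hgoal
  omega

lemma mkE_col (ha : ∀ i j, n i j ≠ 0 ↔ sup ℓ μ i j)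
    (hb : ∀ i, ∑ j ∈ Icc 1 ℓ, n i j = lam i)
    (hd : ∀ i i' : Fin m, (i : ℕ) + 1 = (i' : ℕ) → ∀ k : ℕ,
      (∑ j ∈ Icc 1 k, ((n i' j : ℤ) - (n i (j - 1) : ℤ))) ≤ 0)
    (hstrict : ∀ i j : Fin m, i < j → μ j < μ i)
    (hml : ∀ i, μ i ≤ ℓ) (hmge : ∀ i : Fin m, m ≤ μ i + (i : ℕ))
    (hlstrict : ∀ i j : Fin m, i < j → lam j < lam i) (hsub : ∀ i, μ i ≤ lam i) :
    ∀ d : ℕ, ∀ i i' : Fin m, (i : ℕ) + 1 + d = (i' : ℕ) →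
      (colS μ i ≤ c ∧ c < colS μ i + E ℓ μ n i ℓ) →
      (colS μ i' ≤ c ∧ c < colS μ i' + E ℓ μ n i' ℓ) →
      mkE ℓ μ n i c < mkE ℓ μ n i' c := by
  intro d
  induction d with
  | zero =>
    intro i i' h hr hr'
    exact mkE_col_adj ha hd hstrict hml hmge h hr hr'
  | succ d ih =>
    intro i i' h hr hr'
    have him' := i'.isLt
    have hmid : (i' : ℕ) - 1 < m := by omega
    set im : Fin m := ⟨(i' : ℕ) - 1, hmid⟩ with him
    have h1 : (i : ℕ) + 1 + d = (im : ℕ) := by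
      show _ = (i' : ℕ) - 1
      omega
    have h2 : (im : ℕ) + 1 = (i' : ℕ) := by
      show (i' : ℕ) - 1 + 1 = _
      omega
    have hrm : colS μ im ≤ c ∧ c < colS μ im + E ℓ μ n im ℓ := by
      have eim := E_total ha (hb im) (hml im)
      have ei' := E_total ha (hb i') (hml i')
      have g1 := fin_gap hstrict ((im : ℕ) - (i : ℕ)) i im (by omega)
      have g2 := fin_gap hlstrict ((i' : ℕ) - (im : ℕ)) im i' (by omega)
      have e2 := hmge i
      have e3 := hmge im
      have e4 := hmge i'
      have e5 := hsub i
      have e6 := hsub im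
      have e7 := hsub i'
      have e8 := i.isLt
      unfold colS at *
      constructor
      · omega
      · omega
    exact lt_trans (ih i im h1 hr hrm) (mkE_col_adj ha hd hstrict hml hmge h2 hrm hr')

end mkElemmas

/-- The shifted restricted tableau associated to a multiplicity matrix. -/
noncomputable def mkSRT (μ lam : Fin m → ℕ) (T : ℕ → ℕ)
    (hstrict : ∀ i j : Fin m, i < j → μ j < μ i)
    (hml : ∀ i, μ i ≤ ℓ) (hmge : ∀ i : Fin m, m ≤ μ i + (i : ℕ))
    (hlstrict : ∀ i j : Fin m, i < j → lam j < lam i) (hsub : ∀ i, μ i ≤ lam i)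
    (n : Fin m → ℕ → ℕ) (hN : IsN ℓ μ lam T n) : SRTab m ℓ μ lam where
  entry := mkE ℓ μ n
  supp i c := by
    have hreg : (colS μ i ≤ c ∧ c < colS μ i + E ℓ μ n i ℓ) ↔
        (μ i - (m - 1 - (i : ℕ)) ≤ c ∧ c < lam i - (m - 1 - (i : ℕ))) := by
      rw [E_total hN.1 (hN.2.1 i) (hml i)]
      have := hmge i
      have := i.isLt
      have := hsub i
      unfold colS
      omega
    rw [← hreg]
    exact mkE_nz_iff
  le_alpha i c := by
    by_cases hreg : colS μ i ≤ c ∧ c < colS μ i + E ℓ μ n i ℓ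
    · exact mkE_le_l hreg
    · rw [mkE, if_neg hreg]
      exact Nat.zero_le ℓ
  row i c c' hle h1 h2 := by
    have hr := mkE_nz_iff.1 h1
    have hr' := mkE_nz_iff.1 h2
    rw [mkE_le_iff hr]
    have := mkE_mem hr'
    omega
  col i i' c hii h1 h2 := by
    have hr := mkE_nz_iff.1 h1
    have hr' := mkE_nz_iff.1 h2
    have hii' : (i : ℕ) < (i' : ℕ) := hii
    exact mkE_col hN.1 hN.2.1 hN.2.2.2 hstrict hml hmge hlstrict hsub
      ((i' : ℕ) - (i : ℕ) - 1) i i' (by omega) hr hr'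
  restrict i c h0 := by
    have hr := mkE_nz_iff.1 h0
    exact lt_diagHt_of_sup hstrict (mkE_sup hN.1 hr)

lemma mkSRT_entry (μ lam : Fin m → ℕ) (T : ℕ → ℕ) (hstrict) (hml) (hmge) (hlstrict) (hsub)
    (n : Fin m → ℕ → ℕ) (hN : IsN ℓ μ lam T n) :
    (mkSRT μ lam T hstrict hml hmge hlstrict hsub n hN).entry = mkE ℓ μ n := rfl

lemma cnt_mkSRT (μ lam : Fin m → ℕ) (T : ℕ → ℕ) (hstrict) (hml) (hmge) (hlstrict) (hsub)
    (n : Fin m → ℕ → ℕ) (hN : IsN ℓ μ lam T n) (i : Fin m) {k : ℕ} (hk : k ≤ ℓ) :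
    cnt (mkSRT μ lam T hstrict hml hmge hlstrict hsub n hN) i k = E ℓ μ n i k := by
  unfold cnt
  rw [mkSRT_entry]
  have hset : (range (lam i)).filter (fun c => mkE ℓ μ n i c ≠ 0 ∧ mkE ℓ μ n i c ≤ k)
      = Ico (colS μ i) (colS μ i + E ℓ μ n i k) := by
    ext c
    rw [mem_filter, mem_range, mem_Ico]
    constructor
    · rintro ⟨hcl, hne, hle⟩
      have hr := mkE_nz_iff.1 hne
      rw [mkE_le_iff hr] at hle
      exact ⟨hr.1, by omega⟩
    · rintro ⟨h1, h2⟩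
      have hEm : E ℓ μ n i k ≤ E ℓ μ n i ℓ := E_mono n i hk
      have hr : colS μ i ≤ c ∧ c < colS μ i + E ℓ μ n i ℓ := ⟨h1, by omega⟩
      have hcl : c < lam i := by
        have := E_total hN.1 (hN.2.1 i) (hml i)
        have := hmge i
        have := hsub i
        have := i.isLt
        unfold colS at *
        omega
      refine ⟨hcl, mkE_nz_iff.2 hr, ?_⟩
      rw [mkE_le_iff hr]
      omega
  rw [hset, Nat.card_Ico]
  omega

lemma extR_mkSRT (μ lam : Fin m → ℕ) (T : ℕ → ℕ) (hstrict) (hml) (hmge) (hlstrict) (hsub)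
    (n : Fin m → ℕ → ℕ) (hN : IsN ℓ μ lam T n) (i : Fin m) {v : ℕ}
    (hv1 : 1 ≤ v) (hv2 : v ≤ ℓ) :
    extR (mkSRT μ lam T hstrict hml hmge hlstrict hsub n hN) i v
      = n i v - (if sup ℓ μ i v then 1 else 0) := by
  have h1 := cnt_succ (mkSRT μ lam T hstrict hml hmge hlstrict hsub n hN) i hv1
  rw [cnt_mkSRT μ lam T hstrict hml hmge hlstrict hsub n hN i hv2,
    cnt_mkSRT μ lam T hstrict hml hmge hlstrict hsub n hN i (show v - 1 ≤ ℓ by omega)] at h1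
  have h2 := E_succ (ℓ := ℓ) (μ := μ) n i hv1
  omega

/-- Side B equivalence. -/
noncomputable def equivB (μ lam : Fin m → ℕ) (T : ℕ → ℕ)
    (hstrict : ∀ i j : Fin m, i < j → μ j < μ i)
    (hml : ∀ i, μ i ≤ ℓ) (hmge : ∀ i : Fin m, m ≤ μ i + (i : ℕ))
    (hlstrict : ∀ i j : Fin m, i < j → lam j < lam i) (hsub : ∀ i, μ i ≤ lam i) :
    {n : Fin m → ℕ → ℕ // IsN ℓ μ lam T n} ≃
      {R : SRTab m ℓ μ lam // ∀ v, 1 ≤ v → v ≤ ℓ → R.wt v = T v} where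
  toFun np := ⟨mkSRT μ lam T hstrict hml hmge hlstrict hsub np.1 np.2, by
    intro v hv1 hv2
    have hwt : (mkSRT μ lam T hstrict hml hmge hlstrict hsub np.1 np.2).wt v
        = ∑ i : Fin m, (np.1 i v - if sup ℓ μ i v then 1 else 0) := by
      unfold SRTab.wt
      refine Finset.sum_congr rfl fun i _ => ?_
      exact extR_mkSRT μ lam T hstrict hml hmge hlstrict hsub np.1 np.2 i hv1 hv2
    have hsplit : ∑ i : Fin m, np.1 i v
        = (∑ i : Fin m, (np.1 i v - if sup ℓ μ i v then 1 else 0)) + diagHt m μ ℓ v := by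
      rw [diagHt_eq μ hv1 hv2, ← Finset.sum_add_distrib]
      refine Finset.sum_congr rfl fun i _ => ?_
      by_cases h : sup ℓ μ i v
      · have := (np.2.1 i v).2 h
        simp only [h, if_true]
        omega
      · have h0 : np.1 i v = 0 := by
          by_contra hc'
          exact h ((np.2.1 i v).1 hc')
        simp [h, h0]
    have hc := np.2.2.2.1 v hv1 hv2
    omega⟩
  invFun Rp := ⟨toN Rp.1, by
    refine ⟨toN_a hstrict Rp.1, ?_, ?_, ?_⟩
    · intro i
      have h1 := sum_n_eq (toN_a hstrict Rp.1) i ℓ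
      rw [E_toN Rp.1 i ℓ, cnt_top Rp.1 (hmge i) (hsub i)] at h1
      have := hml i
      have := hsub i
      omega
    · intro j h1 h2
      have hsum : ∑ i : Fin m, toN Rp.1 i j = Rp.1.wt j + diagHt m μ ℓ j := by
        rw [diagHt_eq μ h1 h2]
        unfold SRTab.wt
        rw [← Finset.sum_add_distrib]
        refine Finset.sum_congr rfl fun i _ => ?_
        unfold toN
        rw [if_pos h1]
        rfl
      have hw := Rp.2 j h1 h2
      omega
    · intro i i' hii k
      by_cases hk : 1 ≤ k
      · rw [Finset.sum_sub_distrib]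
        have h0 : toN Rp.1 i 0 = 0 := by
          unfold toN
          rw [if_neg (by omega)]
        have hshift : ∑ j ∈ Icc 1 k, ((toN Rp.1 i (j - 1) : ℤ))
            = ∑ j ∈ Icc 1 (k - 1), (toN Rp.1 i j : ℤ) :=
          shift_sum (fun j => (toN Rp.1 i j : ℤ)) (by show ((toN Rp.1 i 0 : ℕ) : ℤ) = 0; rw [h0]; rfl) hk
        rw [hshift]
        have key : ∑ j ∈ Icc 1 k, toN Rp.1 i' j ≤ ∑ j ∈ Icc 1 (k - 1), toN Rp.1 i j := by
          have hA := sum_n_eq (toN_a hstrict Rp.1) i' k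
          have hB := sum_n_eq (toN_a hstrict Rp.1) i (k - 1)
          rw [E_toN] at hA hB
          by_cases hsmall : k ≤ ℓ - μ i'
          · rw [cnt_zero hstrict Rp.1 (hml i') hsmall] at hA
            have := hml i'
            omega
          · have hclaim := cnt_claim Rp.1 hstrict hlstrict hmge hsub hii k
            push_neg at hsmall
            have := hml i
            have := hml i'
            have hmui : μ i' < μ i := hstrict i i' (by rw [Fin.lt_def]; omega)
            omega
        have hkey : (∑ j ∈ Icc 1 k, (toN Rp.1 i' j : ℤ))
            ≤ ∑ j ∈ Icc 1 (k - 1), (toN Rp.1 i j : ℤ) := by exact_mod_cast key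
        omega
      · have hk0 : k = 0 := by omega
        subst hk0
        simp⟩
  left_inv np := by
    refine Subtype.ext ?_
    obtain ⟨n, hN⟩ := np
    funext i j
    show toN (mkSRT μ lam T hstrict hml hmge hlstrict hsub n hN) i j = n i j
    unfold toN
    by_cases hj : 1 ≤ j
    · rw [if_pos hj]
      by_cases hjl : j ≤ ℓ
      · have hext := extR_mkSRT μ lam T hstrict hml hmge hlstrict hsub n hN i hj hjl
        rw [hext]
        by_cases hs : sup ℓ μ i j
        · have := (hN.1 i j).2 hs
          simp only [hs, if_true]
          omega
        · have h0 : n i j = 0 := by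
            by_contra hc'
            exact hs ((hN.1 i j).1 hc')
          simp [hs, h0]
      · push_neg at hjl
        have h0 : n i j = 0 := by
          by_contra hc'
          exact absurd ((hN.1 i j).1 hc').2.1 (by omega)
        have hx : extR (mkSRT μ lam T hstrict hml hmge hlstrict hsub n hN) i j = 0 :=
          extR_gt _ (by omega)
        have hs : ¬ sup ℓ μ i j := fun hs => absurd hs.2.1 (by omega)
        rw [hx, if_neg hs, h0]
    · rw [if_neg hj]
      have h0 : n i j = 0 := by
        by_contra hc'
        exact absurd ((hN.1 i j).1 hc').1 hj
      rw [h0]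
  right_inv Rp := by
    refine Subtype.ext (SRTab.ext' ?_)
    funext i c
    show mkE ℓ μ (toN Rp.1) i c = Rp.1.entry i c
    have hE : ∀ k, E ℓ μ (toN Rp.1) i k = cnt Rp.1 i k := fun k => E_toN Rp.1 i k
    have hreg_iff : (colS μ i ≤ c ∧ c < colS μ i + E ℓ μ (toN Rp.1) i ℓ)
        ↔ Rp.1.entry i c ≠ 0 := by
      rw [hE ℓ, cnt_top Rp.1 (hmge i) (hsub i), Rp.1.supp i c]
      have := hmge i
      have := hsub i
      have := i.isLt
      unfold colS
      omega
    by_cases h0 : Rp.1.entry i c ≠ 0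
    · have hreg := hreg_iff.2 h0
      have hb := (Rp.1.supp i c).1 h0
      apply le_antisymm
      · apply mkE_le hreg
        rw [hE]
        have hrl := (row_le_iff Rp.1 h0).1 (le_refl (Rp.1.entry i c))
        unfold colS at *
        omega
      · have hw' := mkE_mem hreg
        rw [hE] at hw'
        rw [row_le_iff Rp.1 h0]
        omega
    · push_neg at h0
      have hreg : ¬(colS μ i ≤ c ∧ c < colS μ i + E ℓ μ (toN Rp.1) i ℓ) := fun hr =>
        (hreg_iff.1 hr) h0
      rw [mkE, if_neg hreg, h0]

end sideB

end S17


/-- for a strict partition `μ` with `m` distinct nonzero parts,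
largest part `ℓ`, a strict partition `λ ⊇ μ`, and `T = (T_1, …, T_ℓ)`, there is a
bijection between maximal shifted multiset tableaux of shape `μ` with weight `λ`
and diagonal weight `T`, and shifted restricted tableaux in `SRT(λ/μ)` with
weight `T`. -/
theorem stmt17 (m ℓ : ℕ) (hm : 0 < m) (μ lam : Fin m → ℕ)
    (hstrict : ∀ i j : Fin m, i < j → μ j < μ i) (hpos : ∀ i, 0 < μ i)
    (hl : ℓ = μ ⟨0, hm⟩)
    (hlstrict : ∀ i j : Fin m, i < j → lam j < lam i) (hsub : ∀ i, μ i ≤ lam i)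
    (T : ℕ → ℕ) :
    Nonempty
      ({P : ShMT m ℓ μ // P.RowMinUnprimed ∧ P.IsMax ∧
          (∀ i : Fin m, P.wt ((i : ℕ) + 1) = lam i) ∧
          (∀ j, 1 ≤ j → j ≤ ℓ → P.dw j = T j)} ≃
        {R : SRTab m ℓ μ lam // ∀ v, 1 ≤ v → v ≤ ℓ → R.wt v = T v}) := by
  have hml : ∀ i : Fin m, μ i ≤ ℓ := by
    intro i
    have h1 := S17.fin_gap hstrict (i : ℕ) ⟨0, hm⟩ i (by simp)
    omega
  have hmge : ∀ i : Fin m, m ≤ μ i + (i : ℕ) := by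
    intro i
    have him := i.isLt
    set jl : Fin m := ⟨m - 1, by omega⟩ with hjl
    have h1 := S17.fin_gap hstrict ((m - 1) - (i : ℕ)) i jl (by simp [hjl]; omega)
    have h2 := hpos jl
    omega
  exact ⟨(S17.equivA ℓ μ lam T).trans (S17.equivB μ lam T hstrict hml hmge hlstrict hsub)⟩
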